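/- Let (x_k)_{k ≥ 1} be a nonincreasing sequence of nonnegative real numbers and suppose there exist A > 0 and γ > 1 with x_k ≤ A k^{−γ} for all k ≥ 1. Then there exists a constant C > 0 depending only on A and γ such that for every m ≥ 1, Σ_{k ≥ m} (x_k − x_{k+1})^{1/2} ≤ C m^{(1−γ)/2}. -/

import Mathlib

open Finset Real

private lemma block_bound (x : ℕ → ℝ) (hmono : Antitone x) (hpos : ∀ k, 0 ≤ x k)
    (A γ : ℝ) (hA : 0 < A) (hγ : 1 < γ)
    (hdecay : ∀ k : ℕ, 1 ≤ k → x k ≤ A * (k : ℝ) ^ (-γ))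
    (n j : ℕ) (hn : 1 ≤ n) (hj : j ≤ n) :
    ∑ k ∈ range j, Real.sqrt (x (n + k) - x (n + k + 1)) ≤
      Real.sqrt A * (n : ℝ) ^ ((1 - γ) / 2) := by
  have hnpos : (0:ℝ) < n := by exact_mod_cast hn
  set S := ∑ k ∈ range j, Real.sqrt (x (n + k) - x (n + k + 1)) with hS
  have hSnn : 0 ≤ S := Finset.sum_nonneg fun k _ => Real.sqrt_nonneg _
  have hsq : S ^ 2 ≤ (j : ℝ) * (x n - x (n + j)) := by
    have := sq_sum_le_card_mul_sum_sq (s := range j)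
      (f := fun k => Real.sqrt (x (n + k) - x (n + k + 1)))
    simp only [Finset.card_range] at this
    calc S ^ 2 ≤ (j : ℝ) * ∑ k ∈ range j, Real.sqrt (x (n + k) - x (n + k + 1)) ^ 2 := this
      _ = (j : ℝ) * (x n - x (n + j)) := by
          congr 1
          have : ∀ k ∈ range j, Real.sqrt (x (n + k) - x (n + k + 1)) ^ 2
              = x (n + k) - x (n + k + 1) := by
            intro k _
            exact Real.sq_sqrt (sub_nonneg.mpr (hmono (Nat.le_succ _)))
          rw [Finset.sum_congr rfl this]
          have := Finset.sum_range_sub' (f := fun k => x (n + k)) (n := j)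
          simpa [add_assoc] using this
  have hsq2 : S ^ 2 ≤ A * (n : ℝ) ^ (1 - γ) := by
    have h1 : x n - x (n + j) ≤ x n := by
      have := hpos (n + j); linarith
    have h2 : x n ≤ A * (n : ℝ) ^ (-γ) := hdecay n hn
    have h3 : (j : ℝ) ≤ (n : ℝ) := by exact_mod_cast hj
    have hxnn : 0 ≤ x n - x (n + j) := sub_nonneg.mpr (hmono (Nat.le_add_right _ _))
    calc S ^ 2 ≤ (j : ℝ) * (x n - x (n + j)) := hsq
      _ ≤ (n : ℝ) * (A * (n : ℝ) ^ (-γ)) := by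
          apply mul_le_mul h3 (le_trans (by linarith) h2) hxnn (le_of_lt hnpos)
      _ = A * (n : ℝ) ^ (1 - γ) := by
          rw [mul_left_comm]
          congr 1
          rw [show (1 - γ) = 1 + (-γ) by ring, Real.rpow_add hnpos, Real.rpow_one]
  have : S ≤ Real.sqrt (A * (n : ℝ) ^ (1 - γ)) := by
    have := Real.sqrt_le_sqrt hsq2
    rwa [Real.sqrt_sq hSnn] at this
  calc S ≤ Real.sqrt (A * (n : ℝ) ^ (1 - γ)) := this
    _ = Real.sqrt A * (n : ℝ) ^ ((1 - γ) / 2) := by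
        rw [Real.sqrt_mul (le_of_lt hA), Real.sqrt_eq_rpow ((n:ℝ) ^ (1-γ)),
          ← Real.rpow_mul hnpos.le, mul_one_div]

private lemma key_bound (x : ℕ → ℝ) (hmono : Antitone x) (hpos : ∀ k, 0 ≤ x k)
    (A γ : ℝ) (hA : 0 < A) (hγ : 1 < γ)
    (hdecay : ∀ k : ℕ, 1 ≤ k → x k ≤ A * (k : ℝ) ^ (-γ)) :
    ∀ N n : ℕ, 1 ≤ n →
      ∑ k ∈ range N, Real.sqrt (x (n + k) - x (n + k + 1)) ≤
        (Real.sqrt A / (1 - (2:ℝ) ^ ((1 - γ) / 2))) * (n : ℝ) ^ ((1 - γ) / 2) := by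
  have hβ : (1 - γ) / 2 < 0 := by linarith
  have hr1 : (2:ℝ) ^ ((1 - γ) / 2) < 1 :=
    Real.rpow_lt_one_of_one_lt_of_neg one_lt_two hβ
  have hr0 : (0:ℝ) < (2:ℝ) ^ ((1 - γ) / 2) := Real.rpow_pos_of_pos two_pos _
  set r := (2:ℝ) ^ ((1 - γ) / 2) with hr
  set C := Real.sqrt A / (1 - r) with hC
  have hsA : 0 < Real.sqrt A := Real.sqrt_pos.mpr hA
  have hCpos : 0 < C := div_pos hsA (by linarith)
  have hAC : Real.sqrt A + C * r = C := by
    have hne : (1:ℝ) - r ≠ 0 := by linarith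
    rw [hC]
    field_simp
    ring
  intro N
  induction N using Nat.strong_induction_on with
  | _ N ih =>
    intro n hn
    have hnpos : (0:ℝ) < n := by exact_mod_cast hn
    by_cases hNn : N ≤ n
    · calc ∑ k ∈ range N, Real.sqrt (x (n + k) - x (n + k + 1))
          ≤ Real.sqrt A * (n : ℝ) ^ ((1 - γ) / 2) :=
            block_bound x hmono hpos A γ hA hγ hdecay n N hn hNn
        _ ≤ C * (n : ℝ) ^ ((1 - γ) / 2) := by
            apply mul_le_mul_of_nonneg_right _ (by positivity)
            rw [hC]
            rw [le_div_iff₀ (by linarith)]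
            nlinarith [hsA.le, hr0.le]
    · push_neg at hNn
      have hsplit : N = n + (N - n) := by omega
      rw [hsplit, Finset.sum_range_add]
      have h1 : ∑ k ∈ range n, Real.sqrt (x (n + k) - x (n + k + 1))
          ≤ Real.sqrt A * (n : ℝ) ^ ((1 - γ) / 2) :=
        block_bound x hmono hpos A γ hA hγ hdecay n n hn le_rfl
      have h2 : ∑ k ∈ range (N - n), Real.sqrt (x (n + (n + k)) - x (n + (n + k) + 1))
          ≤ C * ((2 * n : ℕ) : ℝ) ^ ((1 - γ) / 2) := by
        have := ih (N - n) (by omega) (2 * n) (by omega)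
        simpa [two_mul, add_assoc] using this
      have h3 : ((2 * n : ℕ) : ℝ) ^ ((1 - γ) / 2) = r * (n : ℝ) ^ ((1 - γ) / 2) := by
        push_cast
        rw [Real.mul_rpow (by norm_num) hnpos.le]
      rw [h3] at h2
      calc _ ≤ Real.sqrt A * (n : ℝ) ^ ((1 - γ) / 2) + C * (r * (n : ℝ) ^ ((1 - γ) / 2)) :=
            add_le_add h1 h2
        _ = (Real.sqrt A + C * r) * (n : ℝ) ^ ((1 - γ) / 2) := by ring
        _ = C * (n : ℝ) ^ ((1 - γ) / 2) := by rw [hAC]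

/-- summation lemma: if a nonincreasing nonnegative sequence satisfies
`x_k ≤ A k^{-γ}` with `γ > 1`, then `Σ_{k ≥ m} (x_k - x_{k+1})^{1/2} ≤ C m^{(1-γ)/2}`. -/
theorem summation_of_square_roots_of_differences
    (x : ℕ → ℝ) (hmono : Antitone x) (hpos : ∀ k, 0 ≤ x k)
    (A γ : ℝ) (hA : 0 < A) (hγ : 1 < γ)
    (hdecay : ∀ k : ℕ, 1 ≤ k → x k ≤ A * (k : ℝ) ^ (-γ)) :
    ∃ C : ℝ, 0 < C ∧ ∀ m : ℕ, 1 ≤ m →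
      Summable (fun k : ℕ => Real.sqrt (x (m + k) - x (m + k + 1))) ∧
      ∑' k : ℕ, Real.sqrt (x (m + k) - x (m + k + 1)) ≤ C * (m : ℝ) ^ ((1 - γ) / 2) := by
  have hβ : (1 - γ) / 2 < 0 := by linarith
  have hr1 : (2:ℝ) ^ ((1 - γ) / 2) < 1 :=
    Real.rpow_lt_one_of_one_lt_of_neg one_lt_two hβ
  have hsA : 0 < Real.sqrt A := Real.sqrt_pos.mpr hA
  refine ⟨Real.sqrt A / (1 - (2:ℝ) ^ ((1 - γ) / 2)), div_pos hsA (by linarith), ?_⟩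
  intro m hm
  have hkey := key_bound x hmono hpos A γ hA hγ hdecay
  have hbdd : ∀ N : ℕ, ∑ k ∈ range N, Real.sqrt (x (m + k) - x (m + k + 1)) ≤
      (Real.sqrt A / (1 - (2:ℝ) ^ ((1 - γ) / 2))) * (m : ℝ) ^ ((1 - γ) / 2) :=
    fun N => hkey N m hm
  have hnn : ∀ k : ℕ, 0 ≤ Real.sqrt (x (m + k) - x (m + k + 1)) :=
    fun k => Real.sqrt_nonneg _
  have hsum : Summable (fun k : ℕ => Real.sqrt (x (m + k) - x (m + k + 1))) :=
    summable_of_sum_range_le hnn hbdd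
  exact ⟨hsum, tsum_le_of_sum_range_le hnn hbdd⟩
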